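/- Let k ≥ 1 and β ≥ 2 be integers, let G be a bipartite graph, let U be a subgraph of G, and let H be a (β,k)-HEDCS of G \ U. Let f ≥ 0 be a real number such that every bipartite (β,k)-HEDCS with vertex parts P' and Q' having at least (β−1)·|P'|/2 edges satisfies |Q'| ≥ f·|P'|. Then μ(H ∪ U) ≥ (2f/(2f+1))·μ(G). -/

import Mathlib

open Finset

variable {V : Type*} [DecidableEq V]

/-- Degree of a vertex in an edge set. -/
def deg (E : Finset (Sym2 V)) (v : V) : ℕ := (E.filter (fun e => v ∈ e)).card

/-- Edge-degree: the sum of the degrees of the two endpoints. -/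
def edeg (E : Finset (Sym2 V)) (e : Sym2 V) : ℕ :=
  Sym2.lift ⟨fun u v => deg E u + deg E v, fun _ _ => add_comm _ _⟩ e

/-- Generalized `(β,β⁻,k)`-HEDCS of `G`: a hierarchical decomposition
`∅ = H_0 ⊆ H_1 ⊆ … ⊆ H_k = Hs` with edge-degrees in `H_i` of new edges at most `β`,
and every edge of `G` outside `Hs` has edge-degree at least `β⁻` in `Hs`. -/
def IsHEDCSgen (G Hs : Finset (Sym2 V)) (β βm k : ℕ) : Prop :=
  Hs ⊆ G ∧ ∃ H : ℕ → Finset (Sym2 V),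
    H 0 = ∅ ∧ H k = Hs ∧
    (∀ i < k, H i ⊆ H (i + 1)) ∧
    (∀ i, 1 ≤ i → i ≤ k → ∀ e ∈ H i \ H (i - 1), edeg (H i) e ≤ β) ∧
    (∀ e ∈ G \ Hs, βm ≤ edeg Hs e)

/-- `(β,k)`-HEDCS of `G`. -/
def IsHEDCS (G Hs : Finset (Sym2 V)) (β k : ℕ) : Prop :=
  IsHEDCSgen G Hs β (β - 1) k

/-- Bipartite `(β,k)`-HEDCS with vertex parts `P` and `Q`
(the base graph is `Hs` itself, so the second HEDCS condition is vacuous). -/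
def IsBipartiteHEDCS (P Q : Finset V) (Hs : Finset (Sym2 V)) (β k : ℕ) : Prop :=
  Disjoint P Q ∧
  (∀ e ∈ Hs, ∃ u v, e = s(u, v) ∧ u ∈ P ∧ v ∈ Q) ∧
  ∃ H : ℕ → Finset (Sym2 V),
    H 0 = ∅ ∧ H k = Hs ∧
    (∀ i < k, H i ⊆ H (i + 1)) ∧
    (∀ i, 1 ≤ i → i ≤ k → ∀ e ∈ H i \ H (i - 1), edeg (H i) e ≤ β)

/-- A matching: a set of pairwise vertex-disjoint (non-loop) edges. -/
def IsMatching (M : Finset (Sym2 V)) : Prop :=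
  (∀ e ∈ M, ¬ e.IsDiag) ∧
  ∀ e ∈ M, ∀ f ∈ M, e ≠ f → ∀ v : V, v ∈ e → v ∉ f

/-- The maximum matching size of the edge set `E`. -/
noncomputable def matchNum (E : Finset (Sym2 V)) : ℕ :=
  sSup {n : ℕ | ∃ M : Finset (Sym2 V), M ⊆ E ∧ IsMatching M ∧ M.card = n}

set_option linter.unusedSectionVars false
set_option linter.unusedVariables false

namespace HedcsAux

/-! ### Basic star / matched / partner infrastructure -/

/-- Edges of `E` incident to `v`. -/
def star (E : Finset (Sym2 V)) (v : V) : Finset (Sym2 V) := E.filter (fun e => v ∈ e)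

lemma mem_star {E : Finset (Sym2 V)} {v : V} {e : Sym2 V} :
    e ∈ star E v ↔ e ∈ E ∧ v ∈ e := by simp [star]

lemma star_card_eq_deg (E : Finset (Sym2 V)) (v : V) : (star E v).card = deg E v := rfl

lemma star_mono {E E' : Finset (Sym2 V)} (h : E ⊆ E') (v : V) : star E v ⊆ star E' v := by
  intro e he; rw [mem_star] at he ⊢; exact ⟨h he.1, he.2⟩

lemma deg_mono {E E' : Finset (Sym2 V)} (h : E ⊆ E') (v : V) : deg E v ≤ deg E' v :=
  card_le_card (star_mono h v)

lemma edeg_mono {E E' : Finset (Sym2 V)} (h : E ⊆ E') (e : Sym2 V) :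
    edeg E e ≤ edeg E' e := by
  induction e using Sym2.inductionOn with
  | hf a b => simpa [edeg] using Nat.add_le_add (deg_mono h a) (deg_mono h b)

lemma edeg_mk (E : Finset (Sym2 V)) (a b : V) : edeg E s(a,b) = deg E a + deg E b := rfl

/-- `v` is covered by some edge of `M`. -/
def Matched (M : Finset (Sym2 V)) (v : V) : Prop := ∃ e ∈ M, v ∈ e

lemma matching_unique {M : Finset (Sym2 V)} (hM : IsMatching M) {e e' : Sym2 V} {v : V}
    (he : e ∈ M) (he' : e' ∈ M) (hv : v ∈ e) (hv' : v ∈ e') : e = e' := by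
  by_contra hne
  exact hM.2 e he e' he' hne v hv hv'

open Classical in
/-- The partner of `v` in `M` (junk value `v` if unmatched). -/
noncomputable def pr (M : Finset (Sym2 V)) (v : V) : V :=
  if h : Matched M v then Sym2.Mem.other' h.choose_spec.2 else v

lemma pr_edge {M : Finset (Sym2 V)} {v : V} (h : Matched M v) : s(v, pr M v) ∈ M := by
  rw [pr, dif_pos h]
  rw [Sym2.other_spec' h.choose_spec.2]
  exact h.choose_spec.1

lemma pr_spec {M : Finset (Sym2 V)} (hM : IsMatching M) {v w : V} (h : s(v, w) ∈ M) :
    pr M v = w := by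
  have hm : Matched M v := ⟨_, h, Sym2.mem_mk_left v w⟩
  have h2 := pr_edge hm
  have h3 := matching_unique hM h2 h (Sym2.mem_mk_left v (pr M v)) (Sym2.mem_mk_left v w)
  rw [Sym2.eq_iff] at h3
  rcases h3 with ⟨-, h3⟩ | ⟨h3, h4⟩
  · exact h3
  · exact absurd (Sym2.mk_isDiag_iff.2 h3) (hM.1 _ h)

lemma pr_ne {M : Finset (Sym2 V)} (hM : IsMatching M) {v : V} (h : Matched M v) :
    pr M v ≠ v := by
  intro he
  have := pr_edge h
  rw [he] at this
  exact hM.1 _ this (by simp [Sym2.mk_isDiag_iff])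

lemma pr_invol {M : Finset (Sym2 V)} (hM : IsMatching M) {v : V} (h : Matched M v) :
    pr M (pr M v) = v := by
  have := pr_edge h
  exact pr_spec hM (by rwa [Sym2.eq_swap] at this)

lemma matched_of_pr_edge {M : Finset (Sym2 V)} {v w : V} (h : s(v,w) ∈ M) : Matched M v :=
  ⟨_, h, Sym2.mem_mk_left v w⟩

lemma matched_of_pr_edge' {M : Finset (Sym2 V)} {v w : V} (h : s(v,w) ∈ M) : Matched M w :=
  ⟨_, h, Sym2.mem_mk_right v w⟩

lemma star_of_matched {M : Finset (Sym2 V)} (hM : IsMatching M) {v : V} (h : Matched M v) :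
    star M v = {s(v, pr M v)} := by
  ext e
  simp only [mem_star, mem_singleton]
  constructor
  · rintro ⟨he, hv⟩
    exact (matching_unique hM he (pr_edge h) hv (by simp)).symm ▸ rfl
  · rintro rfl; exact ⟨pr_edge h, by simp⟩

lemma star_of_unmatched {M : Finset (Sym2 V)} {v : V} (h : ¬ Matched M v) :
    star M v = ∅ := by
  ext e; simp only [mem_star, notMem_empty, iff_false]
  rintro ⟨he, hv⟩; exact h ⟨e, he, hv⟩

lemma matched_iff_star_ne {M : Finset (Sym2 V)} {v : V} :
    Matched M v ↔ star M v ≠ ∅ := by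
  constructor
  · rintro ⟨e, he, hv⟩ hemp
    have : e ∈ star M v := mem_star.2 ⟨he, hv⟩
    simp [hemp] at this
  · intro h
    rcases nonempty_iff_ne_empty.2 h with ⟨e, he⟩
    rw [mem_star] at he
    exact ⟨e, he.1, he.2⟩

lemma matched_congr {M M' : Finset (Sym2 V)} {v : V} (h : star M v = star M' v) :
    Matched M v ↔ Matched M' v := by
  rw [matched_iff_star_ne, matched_iff_star_ne, h]

lemma pr_congr {M M' : Finset (Sym2 V)} (hM : IsMatching M) (hM' : IsMatching M') {v : V}
    (h : star M v = star M' v) (hm : Matched M v) : pr M v = pr M' v := by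
  have hm' : Matched M' v := (matched_congr h).1 hm
  have : s(v, pr M' v) ∈ star M' v := mem_star.2 ⟨pr_edge hm', by simp⟩
  rw [← h, mem_star] at this
  exact pr_spec hM this.1

/-! ### Matching surgery -/

lemma isMatching_subset {M M' : Finset (Sym2 V)} (h : M' ⊆ M) (hM : IsMatching M) :
    IsMatching M' :=
  ⟨fun e he => hM.1 e (h he), fun e he f hf hne v hv => hM.2 e (h he) f (h hf) hne v hv⟩

lemma isMatching_empty : IsMatching (∅ : Finset (Sym2 V)) := by
  constructor <;> simp

lemma isMatching_insert {M : Finset (Sym2 V)} (hM : IsMatching M) {x y : V}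
    (hx : ¬ Matched M x) (hy : ¬ Matched M y) (hxy : x ≠ y) :
    IsMatching (insert s(x,y) M) := by
  constructor
  · intro e he
    rcases mem_insert.1 he with rfl | he
    · simp [Sym2.mk_isDiag_iff, hxy]
    · exact hM.1 e he
  · intro e he f hf hne v hv hvf
    rcases mem_insert.1 he with he1 | he2
    · rcases mem_insert.1 hf with hf1 | hf2
      · exact hne (he1.trans hf1.symm)
      · subst he1
        rcases Sym2.mem_iff.1 hv with rfl | rfl
        · exact hx ⟨f, hf2, hvf⟩
        · exact hy ⟨f, hf2, hvf⟩
    · rcases mem_insert.1 hf with hf1 | hf2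
      · subst hf1
        rcases Sym2.mem_iff.1 hvf with rfl | rfl
        · exact hx ⟨e, he2, hv⟩
        · exact hy ⟨e, he2, hv⟩
      · exact hM.2 e he2 f hf2 hne v hv hvf

lemma star_insert_of_not_mem {E : Finset (Sym2 V)} {e : Sym2 V} {v : V} (h : v ∉ e) :
    star (insert e E) v = star E v := by
  ext e'; simp only [mem_star, mem_insert]
  constructor
  · rintro ⟨rfl | he', hv⟩
    · exact absurd hv h
    · exact ⟨he', hv⟩
  · rintro ⟨he', hv⟩; exact ⟨Or.inr he', hv⟩

lemma star_erase {E : Finset (Sym2 V)} {e : Sym2 V} {v : V} :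
    star (E.erase e) v = (star E v).erase e := by
  ext e'; simp only [mem_star, mem_erase]; tauto

/-! ### matchNum -/

lemma matchNum_bdd (E : Finset (Sym2 V)) :
    BddAbove {n : ℕ | ∃ M : Finset (Sym2 V), M ⊆ E ∧ IsMatching M ∧ M.card = n} := by
  refine ⟨E.card, ?_⟩
  rintro n ⟨M, hs, -, rfl⟩
  exact card_le_card hs

lemma matchNum_ub {E M : Finset (Sym2 V)} (hs : M ⊆ E) (hM : IsMatching M) :
    M.card ≤ matchNum E :=
  le_csSup (matchNum_bdd E) ⟨M, hs, hM, rfl⟩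

lemma exists_max_matching (E : Finset (Sym2 V)) :
    ∃ M : Finset (Sym2 V), M ⊆ E ∧ IsMatching M ∧ M.card = matchNum E := by
  have := Nat.sSup_mem (s := {n : ℕ | ∃ M : Finset (Sym2 V), M ⊆ E ∧ IsMatching M ∧ M.card = n})
    ⟨0, ∅, by simp [isMatching_empty]⟩ (matchNum_bdd E)
  exact this

/-! ### Vertex sets of edges -/

/-- The two endpoints of an edge, as a finset. -/
def everts (e : Sym2 V) : Finset V :=
  Sym2.lift ⟨fun a b => ({a, b} : Finset V), fun a b => pair_comm a b⟩ e

lemma everts_mk (a b : V) : everts s(a,b) = {a, b} := rfl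

lemma mem_everts {v : V} {e : Sym2 V} : v ∈ everts e ↔ v ∈ e := by
  induction e using Sym2.inductionOn with
  | hf a b => simp [everts_mk, Sym2.mem_iff]

lemma card_everts_le (e : Sym2 V) : (everts e).card ≤ 2 := by
  induction e using Sym2.inductionOn with
  | hf a b => exact (card_insert_le _ _).trans (by simp)

lemma card_everts {e : Sym2 V} (h : ¬ e.IsDiag) : (everts e).card = 2 := by
  induction e using Sym2.inductionOn with
  | hf a b =>
    rw [Sym2.mk_isDiag_iff] at h
    rw [everts_mk, card_insert_of_notMem (by simp [h]), card_singleton]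

/-- All matched vertices of an edge set. -/
def Vmat (M : Finset (Sym2 V)) : Finset V := M.biUnion everts

lemma mem_Vmat {M : Finset (Sym2 V)} {v : V} : v ∈ Vmat M ↔ Matched M v := by
  simp only [Vmat, mem_biUnion, mem_everts, Matched]

lemma everts_disjoint {M : Finset (Sym2 V)} (hM : IsMatching M) {e e' : Sym2 V}
    (he : e ∈ M) (he' : e' ∈ M) (hne : e ≠ e') : Disjoint (everts e) (everts e') := by
  rw [disjoint_left]
  intro v hv hv'
  exact hM.2 e he e' he' hne v (mem_everts.1 hv) (mem_everts.1 hv')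

lemma card_Vmat {M : Finset (Sym2 V)} (hM : IsMatching M) : (Vmat M).card = 2 * M.card := by
  rw [Vmat, card_biUnion (fun e he e' he' hne => everts_disjoint hM he he' hne)]
  rw [Finset.sum_congr rfl (fun e he => card_everts (hM.1 e he))]
  simp [mul_comm]

/-! ### Bipartite crossing helpers -/

section Cross

variable {A B : Finset V} {G : Finset (Sym2 V)}

lemma cross (hGbip : ∀ e ∈ G, ∃ u v, e = s(u, v) ∧ u ∈ A ∧ v ∈ B)
    {u w : V} (h : s(u,w) ∈ G) : (u ∈ A ∧ w ∈ B) ∨ (u ∈ B ∧ w ∈ A) := by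
  obtain ⟨a, b, he, ha, hb⟩ := hGbip _ h
  rw [Sym2.eq_iff] at he
  rcases he with ⟨rfl, rfl⟩ | ⟨rfl, rfl⟩
  · exact Or.inl ⟨ha, hb⟩
  · exact Or.inr ⟨hb, ha⟩

lemma cross_iff (hAB : Disjoint A B)
    (hGbip : ∀ e ∈ G, ∃ u v, e = s(u, v) ∧ u ∈ A ∧ v ∈ B)
    {u w : V} (h : s(u,w) ∈ G) : (u ∈ A ↔ w ∉ A) := by
  rcases cross hGbip h with ⟨ha, hb⟩ | ⟨ha, hb⟩
  · simp only [ha, true_iff]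
    exact fun hw => (disjoint_left.1 hAB) hw hb
  · have hu' : u ∉ A := fun h' => (disjoint_left.1 hAB h') ha
    have hw' : w ∈ A := hb
    tauto

lemma cross_ne (hAB : Disjoint A B)
    (hGbip : ∀ e ∈ G, ∃ u v, e = s(u, v) ∧ u ∈ A ∧ v ∈ B)
    {u w : V} (h : s(u,w) ∈ G) : u ≠ w := by
  intro he
  have := cross_iff hAB hGbip h
  rw [he] at this
  tauto

lemma mem_union_AB (hGbip : ∀ e ∈ G, ∃ u v, e = s(u, v) ∧ u ∈ A ∧ v ∈ B)
    {u w : V} (h : s(u,w) ∈ G) : u ∈ A ∪ B := by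
  rcases cross hGbip h with ⟨ha, -⟩ | ⟨ha, -⟩ <;> simp [ha]

end Cross

/-! ### The alternating-reachability closure -/

/-- `Reach HsU M' v E O`: there is an `M'`-alternating chain certifying that some maximum
matching of `HsU` (of the same size as `M'`) exposes `v`; `E` is the set of "even" vertices
of the chain and `O` the "odd" ones. -/
inductive Reach (HsU M' : Finset (Sym2 V)) : V → Finset V → Finset V → Prop
  | base (v : V) (hv : ¬ Matched M' v) : Reach HsU M' v {v} ∅
  | step {v q r : V} {E O : Finset V} (h : Reach HsU M' v E O)
      (hvq : s(v, q) ∈ HsU) (hqr : s(q, r) ∈ M')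
      (hq : q ∉ E ∪ O) (hr : r ∉ E ∪ O) :
      Reach HsU M' r (insert r E) (insert q O)

section ReachLemmas

variable {A B : Finset V} {G HsU M' : Finset (Sym2 V)}
  {v : V} {E O : Finset V}

lemma R_mem (h : Reach HsU M' v E O) : v ∈ E := by
  induction h with
  | base v hv => simp
  | step h hvq hqr hq hr ih => exact mem_insert_self _ _

lemma R_side (hAB : Disjoint A B)
    (hGbip : ∀ e ∈ G, ∃ u v, e = s(u, v) ∧ u ∈ A ∧ v ∈ B)
    (hHsUG : HsU ⊆ G) (hM'HsU : M' ⊆ HsU)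
    (h : Reach HsU M' v E O) :
    (∀ z ∈ E, (z ∈ A ↔ v ∈ A)) ∧ (∀ z ∈ O, ¬ (z ∈ A ↔ v ∈ A)) := by
  induction h with
  | base v hv => constructor
                 · intro z hz; rw [mem_singleton] at hz; rw [hz]
                 · intro z hz; simp at hz
  | @step v q r E O h hvq hqr hq hr ih =>
    have h1 : q ∈ A ↔ v ∉ A := cross_iff hAB hGbip (by rw [Sym2.eq_swap]; exact hHsUG hvq)
    have h2 : r ∈ A ↔ q ∉ A := by
      have h2' : q ∈ A ↔ r ∉ A := cross_iff hAB hGbip (hHsUG (hM'HsU hqr))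
      tauto
    constructor
    · intro z hz
      rcases mem_insert.1 hz with rfl | hz
      · rfl
      · have := ih.1 z hz; tauto
    · intro z hz
      rcases mem_insert.1 hz with rfl | hz
      · tauto
      · have := ih.2 z hz; tauto

lemma R_Esub (h : Reach HsU M' v E O) :
    ∀ z ∈ E, ∃ E' O', E' ⊆ E ∧ O' ⊆ O ∧ Reach HsU M' z E' O' := by
  induction h with
  | base v hv =>
    intro z hz; rw [mem_singleton] at hz; subst hz
    exact ⟨{z}, ∅, Subset.rfl, Subset.rfl, Reach.base z hv⟩
  | @step v q r E O h hvq hqr hq hr ih =>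
    intro z hz
    rcases mem_insert.1 hz with rfl | hz
    · exact ⟨insert z E, insert q O, Subset.rfl, Subset.rfl, Reach.step h hvq hqr hq hr⟩
    · obtain ⟨E', O', hE', hO', hr'⟩ := ih z hz
      exact ⟨E', O', hE'.trans (subset_insert _ _), hO'.trans (subset_insert _ _), hr'⟩

lemma R_Odata (hM' : IsMatching M') (h : Reach HsU M' v E O) :
    ∀ z ∈ O, (∃ s E' O', Reach HsU M' s E' O' ∧ s(s, z) ∈ HsU ∧ E' ⊆ E ∧ O' ⊆ O ∧
      z ∉ E' ∪ O') ∧ Matched M' z ∧ pr M' z ∈ E := by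
  induction h with
  | base v hv => intro z hz; simp at hz
  | @step v q r E O h hvq hqr hq hr ih =>
    intro z hz
    rcases mem_insert.1 hz with rfl | hz
    · refine ⟨⟨v, E, O, h, hvq, subset_insert _ _, subset_insert _ _, hq⟩,
        matched_of_pr_edge hqr, ?_⟩
      rw [pr_spec hM' hqr]
      exact mem_insert_self _ _
    · obtain ⟨⟨s, E', O', hr', hsz, hE', hO', hz'⟩, hm, hpr⟩ := ih z hz
      exact ⟨⟨s, E', O', hr', hsz, hE'.trans (subset_insert _ _),
        hO'.trans (subset_insert _ _), hz'⟩, hm, (subset_insert _ _) hpr⟩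

end ReachLemmas

section Cert

variable {HsU M' : Finset (Sym2 V)} {v : V} {E O : Finset V}

/-- Certificate extraction: from a reachability chain, build a matching of the same size
as a context matching `W₀` that exposes `v` and agrees with `W₀` off the chain. -/
lemma R_cert (hM' : IsMatching M') (h : Reach HsU M' v E O) :
    ∀ W₀ : Finset (Sym2 V), IsMatching W₀ → W₀ ⊆ HsU →
    (∀ z ∈ E ∪ O, star W₀ z = star M' z) →
    ∃ W, IsMatching W ∧ W ⊆ HsU ∧ W.card = W₀.card ∧ ¬ Matched W v ∧
      (∀ z, z ∉ E ∪ O → star W z = star W₀ z) := by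
  induction h with
  | base v hv =>
    intro W₀ hW₀ hW₀sub hagree
    refine ⟨W₀, hW₀, hW₀sub, rfl, ?_, fun z _ => rfl⟩
    have : star W₀ v = star M' v := hagree v (by simp)
    rw [matched_iff_star_ne, this, star_of_unmatched hv]
    simp
  | @step v q r E O h hvq hqr hq hr ih =>
    intro W₀ hW₀ hW₀sub hagree
    obtain ⟨W₁, hW₁, hW₁sub, hW₁card, hW₁v, hagree₁⟩ := ih W₀ hW₀ hW₀sub
      (fun z hz => hagree z (by
        rcases mem_union.1 hz with hz | hz
        · exact mem_union_left _ (mem_insert_of_mem hz)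
        · exact mem_union_right _ (mem_insert_of_mem hz)))
    have hvE : v ∈ E := R_mem h
    have hvq_ne : v ≠ q := fun hh => hq (by rw [← hh]; exact mem_union_left _ hvE)
    have hvr_ne : v ≠ r := fun hh => hr (by rw [← hh]; exact mem_union_left _ hvE)
    have hqr_ne : q ≠ r := fun hh => hM'.1 _ hqr (Sym2.mk_isDiag_iff.2 hh)
    have hqM : Matched M' q := matched_of_pr_edge hqr
    have hrM : Matched M' r := matched_of_pr_edge' hqr
    have hprq : pr M' q = r := pr_spec hM' hqr
    have hprr : pr M' r = q := pr_spec hM' (by rwa [Sym2.eq_swap] at hqr)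
    have hstarq : star W₁ q = {s(q, r)} := by
      rw [hagree₁ q hq, hagree q (mem_union_right _ (mem_insert_self _ _)),
        star_of_matched hM' hqM, hprq]
    have hstarr : star W₁ r = {s(r, q)} := by
      rw [hagree₁ r hr, hagree r (mem_union_left _ (mem_insert_self _ _)),
        star_of_matched hM' hrM, hprr]
    have hqrW₁ : s(q, r) ∈ W₁ := by
      have : s(q,r) ∈ star W₁ q := by rw [hstarq]; exact mem_singleton_self _
      exact (mem_star.1 this).1
    have hW₁v_star : star W₁ v = ∅ := star_of_unmatched hW₁v
    -- the new matching
    set W : Finset (Sym2 V) := insert s(v, q) (W₁.erase s(q, r)) with hWdef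
    have herase_matching : IsMatching (W₁.erase s(q, r)) :=
      isMatching_subset (erase_subset _ _) hW₁
    have hev : ¬ Matched (W₁.erase s(q, r)) v := by
      rw [matched_iff_star_ne, star_erase, hW₁v_star]
      simp
    have heq' : ¬ Matched (W₁.erase s(q, r)) q := by
      rw [matched_iff_star_ne, star_erase, hstarq]
      simp
    have hWmatching : IsMatching W := isMatching_insert herase_matching hev heq' hvq_ne
    have hWsub : W ⊆ HsU := by
      rw [hWdef]
      exact insert_subset hvq ((erase_subset _ _).trans hW₁sub)
    have hvqW₁ : s(v, q) ∉ W₁ := by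
      intro hmem
      exact hW₁v ⟨_, hmem, Sym2.mem_mk_left _ _⟩
    have hWcard : W.card = W₀.card := by
      rw [hWdef, card_insert_of_notMem (fun hmem => hvqW₁ (erase_subset _ _ hmem)),
        card_erase_of_mem hqrW₁, ← hW₁card]
      exact Nat.succ_pred_eq_of_pos (card_pos.2 ⟨_, hqrW₁⟩)
    have hrW : ¬ Matched W r := by
      rw [matched_iff_star_ne, hWdef,
        star_insert_of_not_mem (by rw [Sym2.mem_iff]; push_neg; exact ⟨hvr_ne.symm, fun hh => hqr_ne hh.symm⟩),
        star_erase, hstarr]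
      rw [show s(r,q) = s(q,r) from Sym2.eq_swap]
      simp
    refine ⟨W, hWmatching, hWsub, hWcard, hrW, ?_⟩
    intro z hz
    have hzE : z ∉ E ∪ O := fun hh => hz (by
      rcases mem_union.1 hh with hh | hh
      · exact mem_union_left _ (mem_insert_of_mem hh)
      · exact mem_union_right _ (mem_insert_of_mem hh))
    have hzr : z ≠ r := fun hh => hz (by rw [hh]; exact mem_union_left _ (mem_insert_self _ _))
    have hzq : z ≠ q := fun hh => hz (by rw [hh]; exact mem_union_right _ (mem_insert_self _ _))
    have hzv : z ≠ v := fun hh => hz (by rw [hh]; exact mem_union_left _ (mem_insert_of_mem hvE))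
    rw [hWdef, star_insert_of_not_mem (by rw [Sym2.mem_iff]; push_neg; exact ⟨hzv, hzq⟩),
      star_erase, erase_eq_of_notMem (fun hmem => by
        rcases Sym2.mem_iff.1 (mem_star.1 hmem).2 with hh | hh
        · exact hzq hh
        · exact hzr hh),
      hagree₁ z hzE]

end Cert

/-! ### The exposable set `D` and its neighborhood -/

/-- Vertices exposable by an alternating chain. -/
def Dset (HsU M' : Finset (Sym2 V)) : Set V := {v | ∃ E O, Reach HsU M' v E O}

/-- Neighborhood (in `HsU`) of the exposable set. -/
def NDset (HsU M' : Finset (Sym2 V)) : Set V :=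
  {q | ∃ v, v ∈ Dset HsU M' ∧ s(v, q) ∈ HsU}

section DFacts

variable {A B : Finset V} {G HsU M' : Finset (Sym2 V)}
  (hAB : Disjoint A B)
  (hGbip : ∀ e ∈ G, ∃ u v, e = s(u, v) ∧ u ∈ A ∧ v ∈ B)
  (hHsUG : HsU ⊆ G)
  (hM' : IsMatching M') (hM'sub : M' ⊆ HsU)
  (hmax : ∀ W : Finset (Sym2 V), IsMatching W → W ⊆ HsU → W.card ≤ M'.card)

include hAB hGbip hHsUG hM' hM'sub hmax in
/-- Neighbors of exposable vertices are matched. -/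
lemma D_adj_matched {v q : V} (hv : v ∈ Dset HsU M') (hvq : s(v, q) ∈ HsU) :
    Matched M' q := by
  obtain ⟨E, O, hReach⟩ := hv
  by_contra hqfree
  by_cases hqEO : q ∈ E ∪ O
  · rcases mem_union.1 hqEO with hqE | hqO
    · -- side contradiction
      have hs := (R_side hAB hGbip hHsUG hM'sub hReach).1 q hqE
      have hx : v ∈ A ↔ q ∉ A := cross_iff hAB hGbip (hHsUG hvq)
      tauto
    · exact hqfree ((R_Odata hM' hReach q hqO).2.1)
  · obtain ⟨W, hW, hWsub, hWcard, hWv, hWagree⟩ :=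
      R_cert hM' hReach M' hM' hM'sub (fun z _ => rfl)
    have hqW : ¬ Matched W q := by
      rw [matched_iff_star_ne, hWagree q hqEO, star_of_unmatched hqfree]
      simp
    have hvq_ne : v ≠ q := cross_ne hAB hGbip (hHsUG hvq)
    have hbig : IsMatching (insert s(v,q) W) := isMatching_insert hW hWv hqW hvq_ne
    have hins : s(v,q) ∉ W := fun hmem => hWv ⟨_, hmem, Sym2.mem_mk_left _ _⟩
    have := hmax _ hbig (insert_subset hvq hWsub)
    rw [card_insert_of_notMem hins, hWcard] at this
    omega

include hAB hGbip hHsUG hM' hM'sub hmax in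
/-- The matched partner of a neighbor of `D` is itself in `D`. -/
lemma D_adj_partner {v q : V} (hv : v ∈ Dset HsU M') (hvq : s(v, q) ∈ HsU) :
    pr M' q ∈ Dset HsU M' := by
  obtain ⟨E, O, hReach⟩ := hv
  have hqM : Matched M' q := D_adj_matched hAB hGbip hHsUG hM' hM'sub hmax ⟨E, O, hReach⟩ hvq
  by_cases hqEO : q ∈ E ∪ O
  · rcases mem_union.1 hqEO with hqE | hqO
    · exfalso
      have hs := (R_side hAB hGbip hHsUG hM'sub hReach).1 q hqE
      have hx : v ∈ A ↔ q ∉ A := cross_iff hAB hGbip (hHsUG hvq)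
      tauto
    · obtain ⟨-, -, hpr⟩ := R_Odata hM' hReach q hqO
      obtain ⟨E', O', -, -, h'⟩ := R_Esub hReach _ hpr
      exact ⟨E', O', h'⟩
  · set r := pr M' q with hrdef
    have hqrM : s(q, r) ∈ M' := pr_edge hqM
    by_cases hrEO : r ∈ E ∪ O
    · rcases mem_union.1 hrEO with hrE | hrO
      · obtain ⟨E', O', -, -, h'⟩ := R_Esub hReach _ hrE
        exact ⟨E', O', h'⟩
      · exfalso
        -- side contradiction: r has the same side as v, but O has opposite sides
        have hsO := (R_side hAB hGbip hHsUG hM'sub hReach).2 r hrO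
        have h1 : v ∈ A ↔ q ∉ A := cross_iff hAB hGbip (hHsUG hvq)
        have h2 : q ∈ A ↔ r ∉ A := cross_iff hAB hGbip (hHsUG (hM'sub hqrM))
        tauto
    · exact ⟨_, _, Reach.step hReach hvq hqrM hqEO hrEO⟩

include hAB hGbip hHsUG hM' hM'sub hmax in
/-- No `HsU`-edge joins two exposable vertices. -/
lemma D_no_edge {x y : V} (hx : x ∈ Dset HsU M') (hy : y ∈ Dset HsU M')
    (hxy : s(x, y) ∈ HsU) : False := by
  obtain ⟨Ex, Ox, hRx⟩ := hx
  obtain ⟨Ey, Oy, hRy⟩ := hy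
  suffices H : ∀ n : ℕ, ∀ x y : V, ∀ Ex Ox Ey Oy : Finset V,
      Reach HsU M' x Ex Ox → Reach HsU M' y Ey Oy →
      (Ex ∪ Ox).card + (Ey ∪ Oy).card ≤ n → s(x, y) ∈ HsU → False by
    exact H _ x y Ex Ox Ey Oy hRx hRy le_rfl hxy
  intro n
  induction n with
  | zero =>
    intro x y Ex Ox Ey Oy hRx hRy hcard hxy
    have : x ∈ Ex ∪ Ox := mem_union_left _ (R_mem hRx)
    have := card_pos.2 ⟨x, this⟩
    omega
  | succ n ih =>
    intro x y Ex Ox Ey Oy hRx hRy hcard hxy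
    by_cases hdis : ∃ z, z ∈ Ex ∪ Ox ∧ z ∈ Ey ∪ Oy
    · obtain ⟨z, hzx, hzy⟩ := hdis
      have hsidex := R_side hAB hGbip hHsUG hM'sub hRx
      have hsidey := R_side hAB hGbip hHsUG hM'sub hRy
      have hxyA : x ∈ A ↔ y ∉ A := cross_iff hAB hGbip (hHsUG hxy)
      rcases mem_union.1 hzx with hzxE | hzxO <;> rcases mem_union.1 hzy with hzyE | hzyO
      · have h1 := hsidex.1 z hzxE
        have h2 := hsidey.1 z hzyE
        tauto
      · -- z ∈ Ex, z ∈ Oy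
        obtain ⟨Ez, Oz, hEz, hOz, hRz⟩ := R_Esub hRx z hzxE
        obtain ⟨⟨s, E', O', hRs, hsz, hE', hO', hzout⟩, -, -⟩ := R_Odata hM' hRy z hzyO
        have hdrop : (E' ∪ O').card < (Ey ∪ Oy).card := by
          apply card_lt_card
          rw [ssubset_iff_of_subset (union_subset_union hE' hO')]
          exact ⟨z, hzy, hzout⟩
        have hle : (Ez ∪ Oz).card ≤ (Ex ∪ Ox).card :=
          card_le_card (union_subset_union hEz hOz)
        exact ih s z E' O' Ez Oz hRs hRz (by omega) hsz
      · -- z ∈ Ox, z ∈ Ey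
        obtain ⟨Ez, Oz, hEz, hOz, hRz⟩ := R_Esub hRy z hzyE
        obtain ⟨⟨s, E', O', hRs, hsz, hE', hO', hzout⟩, -, -⟩ := R_Odata hM' hRx z hzxO
        have hdrop : (E' ∪ O').card < (Ex ∪ Ox).card := by
          apply card_lt_card
          rw [ssubset_iff_of_subset (union_subset_union hE' hO')]
          exact ⟨z, hzx, hzout⟩
        have hle : (Ez ∪ Oz).card ≤ (Ey ∪ Oy).card :=
          card_le_card (union_subset_union hEz hOz)
        exact ih s z E' O' Ez Oz hRs hRz (by omega) hsz
      · have h1 := hsidex.2 z hzxO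
        have h2 := hsidey.2 z hzyO
        tauto
    · -- disjoint chains: build a double exposure and augment
      push_neg at hdis
      obtain ⟨W₁, hW₁, hW₁sub, hW₁card, hW₁x, hagree₁⟩ :=
        R_cert hM' hRx M' hM' hM'sub (fun z _ => rfl)
      obtain ⟨W₂, hW₂, hW₂sub, hW₂card, hW₂y, hagree₂⟩ :=
        R_cert hM' hRy W₁ hW₁ hW₁sub (fun z hz => by
          rw [hagree₁ z (fun hz' => hdis z hz' hz)])
      have hxout : x ∉ Ey ∪ Oy := fun hh => hdis x (mem_union_left _ (R_mem hRx)) hh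
      have hW₂x : ¬ Matched W₂ x := by
        rw [matched_iff_star_ne, hagree₂ x hxout, ← matched_iff_star_ne]
        exact hW₁x
      have hxy_ne : x ≠ y := cross_ne hAB hGbip (hHsUG hxy)
      have hbig : IsMatching (insert s(x,y) W₂) := isMatching_insert hW₂ hW₂x hW₂y hxy_ne
      have hins : s(x,y) ∉ W₂ := fun hmem => hW₂x ⟨_, hmem, Sym2.mem_mk_left _ _⟩
      have := hmax _ hbig (insert_subset hxy hW₂sub)
      rw [card_insert_of_notMem hins, hW₂card, hW₁card] at this
      omega

end DFacts

/-! ### The expansion instance -/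

lemma edge_eq_of_two_mem {v w : V} {e : Sym2 V} (hv : v ∈ e) (hw : w ∈ e) (hne : v ≠ w) :
    e = s(v, w) := ((Sym2.mem_and_mem_iff hne).1 ⟨hv, hw⟩)

section Instance

variable {A B : Finset V} {G U Hs HsU M' Mstar : Finset (Sym2 V)}
  (hAB : Disjoint A B)
  (hGbip : ∀ e ∈ G, ∃ u v, e = s(u, v) ∧ u ∈ A ∧ v ∈ B)
  (hHsUG : HsU ⊆ G) (hHsHsU : Hs ⊆ HsU)
  (hM' : IsMatching M') (hM'sub : M' ⊆ HsU)
  (hmax : ∀ W : Finset (Sym2 V), IsMatching W → W ⊆ HsU → W.card ≤ M'.card)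

include hAB hGbip hHsUG hHsHsU hM' hM'sub hmax in
lemma instance_bound
    (β k : ℕ) (hβ : 2 ≤ β)
    (Hfam : ℕ → Finset (Sym2 V))
    (hfam0 : Hfam 0 = ∅) (hfamk : Hfam k = Hs)
    (hfammono : ∀ i < k, Hfam i ⊆ Hfam (i + 1))
    (hfamdeg : ∀ i, 1 ≤ i → i ≤ k → ∀ e ∈ Hfam i \ Hfam (i - 1), edeg (Hfam i) e ≤ β)
    (f : ℝ) (hf : 0 ≤ f)
    (hfprop : ∀ (P' Q' : Finset V) (H' : Finset (Sym2 V)),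
      IsBipartiteHEDCS P' Q' H' β k →
      ((β : ℝ) - 1) * P'.card / 2 ≤ (H'.card : ℝ) → f * P'.card ≤ (Q'.card : ℝ))
    (SF SF' : Finset V)
    (hcross2 : ∀ v w : V, s(v, w) ∈ G → v ∈ SF → w ∈ SF')
    (hSS' : ∀ v, v ∈ SF → v ∈ SF' → False)
    (hMst : IsMatching Mstar)
    (pairs : Finset (Sym2 V)) (hpairs_sub : pairs ⊆ Mstar)
    (hpairs : ∀ p ∈ pairs, p ∉ HsU ∧ (β - 1) ≤ edeg Hs p ∧
      ∀ z ∈ everts p, z ∈ Dset HsU M' ∨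
        (z ∉ Dset HsU M' ∧ z ∉ NDset HsU M' ∧ z ∈ SF)) :
    ∃ Q' : Finset V, f * (2 * pairs.card : ℝ) ≤ (Q'.card : ℝ) ∧
      ∀ q ∈ Q', (Matched M' q ∧ q ∉ Dset HsU M') ∧
        (q ∈ NDset HsU M' ∨ q ∈ SF') := by
  classical
  set P' : Finset V := pairs.biUnion everts with hP'def
  have hcls : ∀ w ∈ P', w ∈ Dset HsU M' ∨
      (w ∉ Dset HsU M' ∧ w ∉ NDset HsU M' ∧ w ∈ SF) := by
    intro w hw
    obtain ⟨p, hp, hwp⟩ := mem_biUnion.1 hw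
    exact (hpairs p hp).2.2 w hwp
  -- no internal edges
  have hni : ∀ v ∈ P', ∀ w ∈ P', s(v, w) ∉ Hs := by
    intro v hv w hw hmem
    have hmemG : s(v, w) ∈ G := hHsUG (hHsHsU hmem)
    rcases hcls v hv with hvD | ⟨hvD, hvND, hvSF⟩
    · rcases hcls w hw with hwD | ⟨-, hwND, -⟩
      · exact D_no_edge hAB hGbip hHsUG hM' hM'sub hmax hvD hwD (hHsHsU hmem)
      · exact hwND ⟨v, hvD, hHsHsU hmem⟩
    · rcases hcls w hw with hwD | ⟨-, -, hwSF⟩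
      · exact hvND ⟨w, hwD, by rw [Sym2.eq_swap]; exact hHsHsU hmem⟩
      · exact hSS' w (hwSF) (hcross2 v w hmemG hvSF)
  set H' : Finset (Sym2 V) := Hs.filter (fun e => ∃ v ∈ P', v ∈ e) with hH'def
  have hH'Hs : H' ⊆ Hs := filter_subset _ _
  set Q' : Finset V := (H'.biUnion everts) \ P' with hQ'def
  -- every H' edge goes from P' to Q'
  have hform : ∀ e ∈ H', ∃ u v, e = s(u, v) ∧ u ∈ P' ∧ v ∈ Q' := by
    intro e he
    rw [hH'def, mem_filter] at he
    obtain ⟨heHs, v, hvP', hve⟩ := he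
    have heG : e ∈ G := hHsUG (hHsHsU heHs)
    obtain ⟨a, b, rfl, ha, hb⟩ := hGbip _ heG
    have hab : a ≠ b := cross_ne hAB hGbip heG
    have heH' : s(a, b) ∈ H' := by
      rw [hH'def, mem_filter]; exact ⟨heHs, v, hvP', hve⟩
    rcases Sym2.mem_iff.1 hve with rfl | rfl
    · -- v = a ∈ P'
      have hbQ : b ∈ Q' := by
        rw [hQ'def, mem_sdiff]
        refine ⟨mem_biUnion.2 ⟨_, heH', mem_everts.2 (Sym2.mem_mk_right _ _)⟩, ?_⟩
        intro hbP'
        exact hni v hvP' b hbP' heHs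
      exact ⟨v, b, rfl, hvP', hbQ⟩
    · -- v = b ∈ P'
      have haQ : a ∈ Q' := by
        rw [hQ'def, mem_sdiff]
        refine ⟨mem_biUnion.2 ⟨_, heH', mem_everts.2 (Sym2.mem_mk_left _ _)⟩, ?_⟩
        intro haP'
        exact hni v hvP' a haP' (by rw [Sym2.eq_swap]; exact heHs)
      exact ⟨v, a, Sym2.eq_swap, hvP', haQ⟩
  -- it is a bipartite HEDCS
  have hbip : IsBipartiteHEDCS P' Q' H' β k := by
    refine ⟨Finset.sdiff_disjoint.symm, hform, fun i => Hfam i ∩ H', by simp [hfam0], ?_, ?_, ?_⟩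
    · show Hfam k ∩ H' = H'
      rw [hfamk, inter_eq_right.2 hH'Hs]
    · intro i hi
      exact inter_subset_inter (hfammono i hi) Subset.rfl
    · intro i h1 h2 e he
      rw [mem_sdiff] at he
      have he1 : e ∈ Hfam i := (mem_inter.1 he.1).1
      have heH' : e ∈ H' := (mem_inter.1 he.1).2
      have he2 : e ∉ Hfam (i - 1) := fun hh => he.2 (mem_inter.2 ⟨hh, heH'⟩)
      calc edeg (Hfam i ∩ H') e ≤ edeg (Hfam i) e :=
              edeg_mono inter_subset_left e
        _ ≤ β := hfamdeg i h1 h2 e (mem_sdiff.2 ⟨he1, he2⟩)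
  -- cardinalities
  have hpd : (↑pairs : Set (Sym2 V)).PairwiseDisjoint everts := by
    intro p hp p' hp' hne
    exact everts_disjoint hMst (hpairs_sub hp) (hpairs_sub hp') hne
  have hcardP' : P'.card = 2 * pairs.card := by
    rw [hP'def, card_biUnion (fun p hp p' hp' hne => hpd hp hp' hne)]
    rw [Finset.sum_congr rfl (fun p hp => card_everts (hMst.1 p (hpairs_sub hp)))]
    simp [mul_comm]
  have hH'eq : H' = P'.biUnion (star Hs) := by
    ext e
    rw [hH'def, mem_filter, mem_biUnion]
    constructor
    · rintro ⟨h1, v, hv, hve⟩; exact ⟨v, hv, mem_star.2 ⟨h1, hve⟩⟩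
    · rintro ⟨v, hv, he⟩; rw [mem_star] at he; exact ⟨he.1, v, hv, he.2⟩
  have hstar_disj : ∀ v ∈ P', ∀ w ∈ P', v ≠ w → Disjoint (star Hs v) (star Hs w) := by
    intro v hv w hw hne
    rw [disjoint_left]
    intro e hev hew
    rw [mem_star] at hev hew
    have := edge_eq_of_two_mem hev.2 hew.2 hne
    exact hni v hv w hw (this ▸ hev.1)
  have hcardH' : H'.card = ∑ v ∈ P', deg Hs v := by
    rw [hH'eq, card_biUnion hstar_disj]
    rfl
  have hsum : ∑ v ∈ P', deg Hs v = ∑ p ∈ pairs, edeg Hs p := by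
    rw [hP'def, Finset.sum_biUnion hpd]
    refine Finset.sum_congr rfl (fun p hp => ?_)
    induction p using Sym2.inductionOn with
    | hf a b =>
      have hab : a ≠ b := fun hh => hMst.1 _ (hpairs_sub hp) (Sym2.mk_isDiag_iff.2 hh)
      rw [everts_mk, Finset.sum_insert (by simp [hab]), Finset.sum_singleton, edeg_mk]
  have hmass : ((β : ℝ) - 1) * P'.card / 2 ≤ (H'.card : ℝ) := by
    have h1 : (β - 1) * pairs.card ≤ H'.card := by
      rw [hcardH', hsum]
      calc (β - 1) * pairs.card = ∑ _p ∈ pairs, (β - 1) := by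
              rw [Finset.sum_const, smul_eq_mul, mul_comm]
        _ ≤ ∑ p ∈ pairs, edeg Hs p :=
              Finset.sum_le_sum (fun p hp => (hpairs p hp).2.1)
    have hcast : ((β : ℝ) - 1) = ((β - 1 : ℕ) : ℝ) := by
      rw [Nat.cast_sub (by omega)]; simp
    rw [hcardP', hcast]
    push_cast
    have h2 : ((β - 1 : ℕ) : ℝ) * (2 * (pairs.card : ℝ)) / 2
        = ((β - 1 : ℕ) : ℝ) * (pairs.card : ℝ) := by ring
    rw [h2]
    exact_mod_cast h1
  have hexp := hfprop P' Q' H' hbip hmass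
  rw [hcardP'] at hexp
  push_cast at hexp
  refine ⟨Q', by exact_mod_cast hexp, ?_⟩
  -- properties of Q' members
  intro q hq
  rw [hQ'def, mem_sdiff] at hq
  obtain ⟨hq1, hqP'⟩ := hq
  obtain ⟨e, heH', hqe⟩ := mem_biUnion.1 hq1
  rw [hH'def, mem_filter] at heH'
  obtain ⟨heHs, w, hwP', hwe⟩ := heH'
  have hqw : q ≠ w := fun hh => hqP' (hh ▸ hwP')
  have hewq : e = s(w, q) := edge_eq_of_two_mem hwe (mem_everts.1 hqe) hqw.symm
  have hedge : s(w, q) ∈ Hs := hewq ▸ heHs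
  rcases hcls w hwP' with hwD | ⟨hwD, hwND, hwSF⟩
  · refine ⟨⟨D_adj_matched hAB hGbip hHsUG hM' hM'sub hmax hwD (hHsHsU hedge), ?_⟩,
      Or.inl ⟨w, hwD, hHsHsU hedge⟩⟩
    intro hqD
    exact D_no_edge hAB hGbip hHsUG hM' hM'sub hmax hwD hqD (hHsHsU hedge)
  · have hqD : q ∉ Dset HsU M' := by
      intro hqD
      exact hwND ⟨q, hqD, by rw [Sym2.eq_swap]; exact hHsHsU hedge⟩
    have hqM : Matched M' q := by
      by_contra hfree
      exact hqD ⟨{q}, ∅, Reach.base q hfree⟩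
    exact ⟨⟨hqM, hqD⟩, Or.inr (hcross2 w q (hHsUG (hHsHsU hedge)) hwSF)⟩

end Instance

/-! ### The alternating walk along `Mstar` and `M'` -/

section Walk

open Classical in
/-- One step of the walk: from `x`, go to its `Mstar`-partner `y` (which must be a
neighbor of `D` outside `D`), then to the `M'`-partner of `y`. -/
noncomputable def wstep (HsU M' Mstar : Finset (Sym2 V)) : V → Option V := fun x =>
  if Matched Mstar x ∧ pr Mstar x ∈ NDset HsU M' ∧ pr Mstar x ∉ Dset HsU M' ∧
      Matched M' (pr Mstar x)
  then some (pr M' (pr Mstar x)) else none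

/-- Iterates of the walk. -/
noncomputable def orb (HsU M' Mstar : Finset (Sym2 V)) (u : V) : ℕ → Option V
  | 0 => some u
  | n+1 => (orb HsU M' Mstar u n).bind (wstep HsU M' Mstar)

variable {HsU M' Mstar : Finset (Sym2 V)}

lemma wstep_eq_some {x z : V} (h : wstep HsU M' Mstar x = some z) :
    (Matched Mstar x ∧ pr Mstar x ∈ NDset HsU M' ∧ pr Mstar x ∉ Dset HsU M' ∧
      Matched M' (pr Mstar x)) ∧ z = pr M' (pr Mstar x) := by
  classical
  rw [wstep] at h
  split_ifs at h with hg
  exact ⟨hg, (Option.some_injective _ h).symm⟩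

lemma wstep_matched (hM' : IsMatching M') {x z : V} (h : wstep HsU M' Mstar x = some z) :
    Matched M' z := by
  obtain ⟨⟨-, -, -, hm⟩, rfl⟩ := wstep_eq_some h
  exact matched_of_pr_edge' (pr_edge hm)

lemma wstep_inj (hM' : IsMatching M') (hMst : IsMatching Mstar) {x x' z : V}
    (h : wstep HsU M' Mstar x = some z) (h' : wstep HsU M' Mstar x' = some z) : x = x' := by
  obtain ⟨⟨hm1, -, -, hm2⟩, hz⟩ := wstep_eq_some h
  obtain ⟨⟨hm1', -, -, hm2'⟩, hz'⟩ := wstep_eq_some h'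
  have e1 : pr Mstar x = pr M' z := by rw [hz, pr_invol hM' hm2]
  have e1' : pr Mstar x' = pr M' z := by rw [hz', pr_invol hM' hm2']
  have e2 : x = pr Mstar (pr M' z) := by rw [← e1, pr_invol hMst hm1]
  have e2' : x' = pr Mstar (pr M' z) := by rw [← e1', pr_invol hMst hm1']
  rw [e2, e2']

lemma orb_zero (u : V) : orb HsU M' Mstar u 0 = some u := rfl

lemma orb_succ (u : V) (n : ℕ) :
    orb HsU M' Mstar u (n+1) = (orb HsU M' Mstar u n).bind (wstep HsU M' Mstar) := rfl

lemma orb_succ_elim {u x : V} {n : ℕ} (h : orb HsU M' Mstar u (n+1) = some x) :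
    ∃ w, orb HsU M' Mstar u n = some w ∧ wstep HsU M' Mstar w = some x := by
  rw [orb_succ] at h
  cases ho : orb HsU M' Mstar u n with
  | none => rw [ho] at h; simp at h
  | some w => rw [ho] at h; exact ⟨w, rfl, h⟩

lemma orb_matched (hM' : IsMatching M') {u x : V} {n : ℕ}
    (h : orb HsU M' Mstar u n = some x) : x = u ∨ Matched M' x := by
  cases n with
  | zero => left; exact (Option.some_injective _ h).symm
  | succ n =>
    obtain ⟨w, -, hw⟩ := orb_succ_elim h
    exact Or.inr (wstep_matched hM' hw)

lemma orb_inj (hM' : IsMatching M') (hMst : IsMatching Mstar) {u u' x : V}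
    (hu : ¬ Matched M' u) (hu' : ¬ Matched M' u') :
    ∀ {m n : ℕ}, orb HsU M' Mstar u m = some x → orb HsU M' Mstar u' n = some x →
      u = u' ∧ m = n := by
  intro m
  induction m generalizing x with
  | zero =>
    intro n h h'
    have hxu : x = u := (Option.some_injective _ h).symm
    cases n with
    | zero => exact ⟨(hxu ▸ (Option.some_injective _ h')).symm ▸ hxu.symm ▸ rfl, rfl⟩
    | succ n =>
      obtain ⟨w, -, hw⟩ := orb_succ_elim h'
      exact absurd (wstep_matched hM' hw) (hxu ▸ hu)
  | succ m ih =>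
    intro n h h'
    obtain ⟨w, hwo, hw⟩ := orb_succ_elim h
    cases n with
    | zero =>
      have hxu : x = u' := (Option.some_injective _ h').symm
      exact absurd (wstep_matched hM' hw) (hxu ▸ hu')
    | succ n =>
      obtain ⟨w', hwo', hw'⟩ := orb_succ_elim h'
      have : w = w' := wstep_inj hM' hMst hw hw'
      obtain ⟨he, hn⟩ := ih hwo (this ▸ hwo')
      exact ⟨he, by omega⟩

lemma orb_stops (hM' : IsMatching M') (hMst : IsMatching Mstar) {u : V}
    (hu : ¬ Matched M' u) :
    ∃ n x, orb HsU M' Mstar u n = some x ∧ wstep HsU M' Mstar x = none := by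
  by_contra hcon
  push_neg at hcon
  have hall : ∀ n, ∃ x, orb HsU M' Mstar u n = some x := by
    intro n
    induction n with
    | zero => exact ⟨u, rfl⟩
    | succ n ih =>
      obtain ⟨x, hx⟩ := ih
      have := hcon n x hx
      cases hws : wstep HsU M' Mstar x with
      | none => exact absurd hws this
      | some z => exact ⟨z, by rw [orb_succ, hx]; simpa using hws⟩
  set T : Finset V := insert u (Vmat M') with hT
  choose F hFspec using hall
  have hmaps : ∀ n ∈ Finset.range (T.card + 1), F n ∈ T := by
    intro n _
    rcases orb_matched hM' (hFspec n) with rfl | hm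
    · exact mem_insert_self _ _
    · exact mem_insert_of_mem (mem_Vmat.2 hm)
  obtain ⟨m, -, n, -, hmn, hFeq⟩ :=
    Finset.exists_ne_map_eq_of_card_lt_of_maps_to (by simp) hmaps
  have := orb_inj hM' hMst hu hu (hFspec m) (hFeq ▸ hFspec n)
  omega

open Classical in
/-- The final vertex of the walk started at `u` (junk value `u` if the walk does
not terminate). -/
noncomputable def stopV (HsU M' Mstar : Finset (Sym2 V)) (u : V) : V :=
  if h : ∃ n x, orb HsU M' Mstar u n = some x ∧ wstep HsU M' Mstar x = none
  then h.choose_spec.choose else u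

lemma stopV_spec (hM' : IsMatching M') (hMst : IsMatching Mstar) {u : V}
    (hu : ¬ Matched M' u) :
    ∃ n, orb HsU M' Mstar u n = some (stopV HsU M' Mstar u) ∧
      wstep HsU M' Mstar (stopV HsU M' Mstar u) = none := by
  classical
  have h := orb_stops (HsU := HsU) hM' hMst hu
  rw [stopV, dif_pos h]
  exact ⟨h.choose, h.choose_spec.choose_spec⟩

lemma stopV_inj (hM' : IsMatching M') (hMst : IsMatching Mstar) {u u' : V}
    (hu : ¬ Matched M' u) (hu' : ¬ Matched M' u')
    (h : stopV HsU M' Mstar u = stopV HsU M' Mstar u') : u = u' := by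
  obtain ⟨n, hn, -⟩ := stopV_spec hM' hMst hu
  obtain ⟨n', hn', -⟩ := stopV_spec hM' hMst hu'
  rw [h] at hn
  exact (orb_inj hM' hMst hu hu' hn hn').1

end Walk

end HedcsAux

open HedcsAux in
/-- Let `G` be bipartite, `U ⊆ G`, and `H` a `(β,k)`-HEDCS of `G \ U`.
If `f ≥ 0` is such that every bipartite `(β,k)`-HEDCS with parts `P'`, `Q'` and at least
`(β−1)·|P'|/2` edges satisfies `|Q'| ≥ f·|P'|`, then `μ(H ∪ U) ≥ (2f/(2f+1))·μ(G)`. -/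
theorem hedcs_approx_bipartite {V : Type*} [DecidableEq V]
    (β k : ℕ) (hβ : 2 ≤ β) (hk : 1 ≤ k)
    (A B : Finset V) (G U Hs : Finset (Sym2 V))
    (hAB : Disjoint A B)
    (hGbip : ∀ e ∈ G, ∃ u v, e = s(u, v) ∧ u ∈ A ∧ v ∈ B)
    (hU : U ⊆ G)
    (hH : IsHEDCS (G \ U) Hs β k)
    (f : ℝ) (hf : 0 ≤ f)
    (hfprop : ∀ (P' Q' : Finset V) (H' : Finset (Sym2 V)),
      IsBipartiteHEDCS P' Q' H' β k →
      ((β : ℝ) - 1) * P'.card / 2 ≤ (H'.card : ℝ) → f * P'.card ≤ (Q'.card : ℝ)) :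
    2 * f / (2 * f + 1) * (matchNum G : ℝ) ≤ (matchNum (Hs ∪ U) : ℝ) := by
  classical
  obtain ⟨Mstar, hMstG, hMst, hMstcard⟩ := exists_max_matching G
  obtain ⟨M', hM'sub, hM', hM'card⟩ := exists_max_matching (Hs ∪ U)
  obtain ⟨hHs_sub, Hfam, hfam0, hfamk, hfammono, hfamdeg, houtside⟩ := hH
  have hHsG : Hs ⊆ G := fun e he => (mem_sdiff.1 (hHs_sub he)).1
  have hHsUG : Hs ∪ U ⊆ G := union_subset hHsG hU
  have hHsHsU : Hs ⊆ Hs ∪ U := subset_union_left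
  have hmax : ∀ W : Finset (Sym2 V), IsMatching W → W ⊆ Hs ∪ U → W.card ≤ M'.card := by
    intro W hW hWs
    rw [hM'card]
    exact matchNum_ub hWs hW
  -- abbreviations
  set HsU : Finset (Sym2 V) := Hs ∪ U with hHsUdef
  -- the sets of one-sided free vertices
  set S : Finset V := Vmat Mstar \ Vmat M' with hSdef
  set St : Finset V := Vmat M' \ Vmat Mstar with hStdef
  have hS_free : ∀ u ∈ S, ¬ Matched M' u ∧ Matched Mstar u := by
    intro u hu
    rw [hSdef, mem_sdiff, mem_Vmat, mem_Vmat] at hu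
    exact ⟨hu.2, hu.1⟩
  set sv : V → V := stopV HsU M' Mstar with hsvdef
  set yv : V → V := fun u => pr Mstar (sv u) with hyvdef
  -- the orbit invariant: walk vertices are exposable
  have horbD : ∀ u, ¬ Matched M' u → ∀ n x, orb HsU M' Mstar u n = some x →
      x ∈ Dset HsU M' := by
    intro u hu n
    induction n with
    | zero =>
      intro x hx
      have : x = u := (Option.some_injective _ hx).symm
      exact this ▸ ⟨{u}, ∅, Reach.base u hu⟩
    | succ n ih =>
      intro x hx
      obtain ⟨w, hwo, hws⟩ := orb_succ_elim hx
      obtain ⟨⟨-, hND, -, -⟩, rfl⟩ := wstep_eq_some hws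
      obtain ⟨v, hvD, hedge⟩ := hND
      exact D_adj_partner hAB hGbip hHsUG hM' hM'sub hmax hvD hedge
  have hsvD : ∀ u ∈ S, sv u ∈ Dset HsU M' := by
    intro u hu
    obtain ⟨n, hn, -⟩ := stopV_spec hM' hMst (hS_free u hu).1
    exact horbD u (hS_free u hu).1 n _ hn
  -- stop classification
  have hclass : ∀ u ∈ S, (¬ Matched Mstar (sv u)) ∨
      (Matched Mstar (sv u) ∧ (yv u ∈ Dset HsU M' ∨
        (yv u ∉ Dset HsU M' ∧ yv u ∉ NDset HsU M'))) := by
    intro u hu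
    obtain ⟨n, hn, hstop⟩ := stopV_spec hM' hMst (hS_free u hu).1
    by_cases h1 : Matched Mstar (sv u)
    · right
      refine ⟨h1, ?_⟩
      by_cases h2 : yv u ∈ Dset HsU M'
      · exact Or.inl h2
      · refine Or.inr ⟨h2, fun h3 => ?_⟩
        have h4 : Matched M' (yv u) := by
          obtain ⟨v, hvD, hedge⟩ := h3
          exact D_adj_matched hAB hGbip hHsUG hM' hM'sub hmax hvD hedge
        rw [wstep, if_pos ⟨h1, h3, h2, h4⟩] at hstop
        simp at hstop
    · exact Or.inl h1
  -- ends by type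
  set ED : Finset V := S.filter (fun u => ¬ Matched Mstar (sv u)) with hEDdef
  set EA : Finset V := S.filter
    (fun u => Matched Mstar (sv u) ∧ yv u ∈ Dset HsU M') with hEAdef
  set ECA : Finset V := S.filter
    (fun u => Matched Mstar (sv u) ∧ yv u ∉ Dset HsU M' ∧ yv u ∉ NDset HsU M' ∧ yv u ∈ A)
    with hECAdef
  set ECB : Finset V := S.filter
    (fun u => Matched Mstar (sv u) ∧ yv u ∉ Dset HsU M' ∧ yv u ∉ NDset HsU M' ∧ yv u ∉ A)
    with hECBdef
  have hcover : S.card ≤ ED.card + EA.card + ECA.card + ECB.card := by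
    have hsub : S ⊆ ED ∪ EA ∪ ECA ∪ ECB := by
      intro u hu
      rcases hclass u hu with h1 | ⟨h1, h2 | ⟨h2, h3⟩⟩
      · exact mem_union_left _ (mem_union_left _ (mem_union_left _
          (mem_filter.2 ⟨hu, h1⟩)))
      · exact mem_union_left _ (mem_union_left _ (mem_union_right _
          (mem_filter.2 ⟨hu, h1, h2⟩)))
      · by_cases h4 : yv u ∈ A
        · exact mem_union_left _ (mem_union_right _ (mem_filter.2 ⟨hu, h1, h2, h3, h4⟩))
        · exact mem_union_right _ (mem_filter.2 ⟨hu, h1, h2, h3, h4⟩)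
    calc S.card ≤ (ED ∪ EA ∪ ECA ∪ ECB).card := card_le_card hsub
      _ ≤ (ED ∪ EA ∪ ECA).card + ECB.card := card_union_le _ _
      _ ≤ (ED ∪ EA).card + ECA.card + ECB.card := by
            have := card_union_le (ED ∪ EA) ECA; omega
      _ ≤ ED.card + EA.card + ECA.card + ECB.card := by
            have := card_union_le ED EA; omega
  -- D-stops inject into St
  have hED : ED.card ≤ St.card := by
    apply Finset.card_le_card_of_injOn sv
    · intro u hu
      rw [hEDdef, Finset.mem_coe, mem_filter] at hu
      obtain ⟨huS, hnm⟩ := hu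
      rw [Finset.mem_coe, hStdef, mem_sdiff, mem_Vmat, mem_Vmat]
      constructor
      · rcases orb_matched hM'
          (stopV_spec (HsU := HsU) hM' hMst (hS_free u huS).1).choose_spec.1 with heq | hm
        · exact absurd (show Matched Mstar (sv u) by
            rw [show sv u = u from heq]; exact (hS_free u huS).2) hnm
        · exact hm
      · exact hnm
    · intro u hu u' hu' heq
      rw [Finset.mem_coe, hEDdef, mem_filter] at hu hu'
      exact stopV_inj hM' hMst (hS_free u hu.1).1 (hS_free u' hu'.1).1 heq
  -- pairs
  set pairOf : V → Sym2 V := fun u => s(sv u, yv u) with hpairOfdef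
  set PairsA : Finset (Sym2 V) := EA.image pairOf with hPAdef
  set PairsCA : Finset (Sym2 V) := ECA.image pairOf with hPCAdef
  set PairsCB : Finset (Sym2 V) := ECB.image pairOf with hPCBdef
  have hsv_inj : ∀ u ∈ S, ∀ u' ∈ S, sv u = sv u' → u = u' := by
    intro u hu u' hu' heq
    exact stopV_inj hM' hMst (hS_free u hu).1 (hS_free u' hu').1 heq
  have hsv_mem_everts : ∀ u, sv u ∈ everts (pairOf u) := by
    intro u
    rw [hpairOfdef]
    exact mem_everts.2 (Sym2.mem_mk_left _ _)
  have hEA_card : EA.card ≤ 2 * PairsA.card := by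
    rw [hPAdef]
    apply Finset.card_le_mul_card_image
    intro p hp
    calc (EA.filter (fun u => pairOf u = p)).card ≤ (everts p).card := by
          apply Finset.card_le_card_of_injOn sv
          · intro u hu
            rw [Finset.mem_coe, mem_filter] at hu
            rw [← hu.2]
            exact hsv_mem_everts u
          · intro u hu u' hu' heq
            rw [Finset.mem_coe, mem_filter, hEAdef, mem_filter] at hu hu'
            exact hsv_inj u hu.1.1 u' hu'.1.1 heq
      _ ≤ 2 := card_everts_le p
  have hECA_card : ECA.card = PairsCA.card := by
    rw [hPCAdef]
    refine (Finset.card_image_of_injOn ?_).symm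
    intro u hu u' hu' heq
    rw [Finset.mem_coe, hECAdef, mem_filter] at hu hu'
    have h1 : sv u' ∈ everts (pairOf u) := heq ▸ hsv_mem_everts u'
    rw [hpairOfdef] at h1
    rw [everts_mk, mem_insert, mem_singleton] at h1
    rcases h1 with h1 | h1
    · exact (hsv_inj u' hu'.1 u hu.1 h1).symm
    · exfalso
      have := hsvD u' hu'.1
      rw [h1] at this
      exact hu.2.2.1 this
  have hECB_card : ECB.card = PairsCB.card := by
    rw [hPCBdef]
    refine (Finset.card_image_of_injOn ?_).symm
    intro u hu u' hu' heq
    rw [Finset.mem_coe, hECBdef, mem_filter] at hu hu'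
    have h1 : sv u' ∈ everts (pairOf u) := heq ▸ hsv_mem_everts u'
    rw [hpairOfdef] at h1
    rw [everts_mk, mem_insert, mem_singleton] at h1
    rcases h1 with h1 | h1
    · exact (hsv_inj u' hu'.1 u hu.1 h1).symm
    · exfalso
      have := hsvD u' hu'.1
      rw [h1] at this
      exact hu.2.2.1 this
  have hyv_mem_everts : ∀ u : V, yv u ∈ everts (pairOf u) := by
    intro u
    rw [hpairOfdef]
    exact mem_everts.2 (Sym2.mem_mk_right _ _)
  -- properties of A-type pairs
  have hpairA : ∀ p ∈ PairsA, p ∈ Mstar ∧ p ∉ HsU ∧ (β - 1) ≤ edeg Hs p ∧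
      ∀ z ∈ everts p, z ∈ Dset HsU M' := by
    intro p hp
    rw [hPAdef, mem_image] at hp
    obtain ⟨u, hu, rfl⟩ := hp
    rw [hEAdef, mem_filter] at hu
    obtain ⟨huS, hmat, hyD⟩ := hu
    have hxD := hsvD u huS
    have hpM : pairOf u ∈ Mstar := by
      rw [hpairOfdef, hyvdef]
      exact pr_edge hmat
    have hpH : pairOf u ∉ HsU := by
      rw [hpairOfdef]
      intro hmem
      exact D_no_edge hAB hGbip hHsUG hM' hM'sub hmax hxD hyD hmem
    have hedeg : β - 1 ≤ edeg Hs (pairOf u) := by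
      apply houtside
      rw [mem_sdiff, mem_sdiff]
      exact ⟨⟨hMstG hpM, fun hmem => hpH (mem_union_right _ hmem)⟩,
        fun hmem => hpH (mem_union_left _ hmem)⟩
    refine ⟨hpM, hpH, hedeg, ?_⟩
    intro z hz
    rw [hpairOfdef, everts_mk, mem_insert, mem_singleton] at hz
    rcases hz with rfl | rfl
    · exact hxD
    · exact hyD
  -- properties of C-type pairs
  have hpairC : ∀ u ∈ S, Matched Mstar (sv u) → yv u ∉ Dset HsU M' →
      yv u ∉ NDset HsU M' →
      pairOf u ∈ Mstar ∧ pairOf u ∉ HsU ∧ (β - 1) ≤ edeg Hs (pairOf u) := by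
    intro u huS hmat hyD hyND
    have hxD := hsvD u huS
    have hpM : pairOf u ∈ Mstar := by
      rw [hpairOfdef, hyvdef]
      exact pr_edge hmat
    have hpH : pairOf u ∉ HsU := by
      rw [hpairOfdef]
      intro hmem
      exact hyND ⟨sv u, hxD, hmem⟩
    have hedeg : β - 1 ≤ edeg Hs (pairOf u) := by
      apply houtside
      rw [mem_sdiff, mem_sdiff]
      exact ⟨⟨hMstG hpM, fun hmem => hpH (mem_union_right _ hmem)⟩,
        fun hmem => hpH (mem_union_left _ hmem)⟩
    exact ⟨hpM, hpH, hedeg⟩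
  have hpairCA : ∀ p ∈ PairsCA, p ∈ Mstar ∧ p ∉ HsU ∧ (β - 1) ≤ edeg Hs p ∧
      ∀ z ∈ everts p, z ∈ Dset HsU M' ∨
        (z ∉ Dset HsU M' ∧ z ∉ NDset HsU M' ∧ z ∈ A) := by
    intro p hp
    rw [hPCAdef, mem_image] at hp
    obtain ⟨u, hu, rfl⟩ := hp
    rw [hECAdef, mem_filter] at hu
    obtain ⟨huS, hmat, hyD, hyND, hyA⟩ := hu
    obtain ⟨hpM, hpH, hedeg⟩ := hpairC u huS hmat hyD hyND
    refine ⟨hpM, hpH, hedeg, ?_⟩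
    intro z hz
    rw [hpairOfdef, everts_mk, mem_insert, mem_singleton] at hz
    rcases hz with rfl | rfl
    · exact Or.inl (hsvD u huS)
    · exact Or.inr ⟨hyD, hyND, hyA⟩
  have hpairCB : ∀ p ∈ PairsCB, p ∈ Mstar ∧ p ∉ HsU ∧ (β - 1) ≤ edeg Hs p ∧
      ∀ z ∈ everts p, z ∈ Dset HsU M' ∨
        (z ∉ Dset HsU M' ∧ z ∉ NDset HsU M' ∧ z ∈ B) := by
    intro p hp
    rw [hPCBdef, mem_image] at hp
    obtain ⟨u, hu, rfl⟩ := hp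
    rw [hECBdef, mem_filter] at hu
    obtain ⟨huS, hmat, hyD, hyND, hyA⟩ := hu
    obtain ⟨hpM, hpH, hedeg⟩ := hpairC u huS hmat hyD hyND
    refine ⟨hpM, hpH, hedeg, ?_⟩
    intro z hz
    rw [hpairOfdef, everts_mk, mem_insert, mem_singleton] at hz
    rcases hz with rfl | rfl
    · exact Or.inl (hsvD u huS)
    · have hyB : yv u ∈ B := by
        have hpM' : s(sv u, yv u) ∈ Mstar := by rw [hpairOfdef] at hpM; exact hpM
        rcases cross hGbip (hMstG hpM') with ⟨-, hyB⟩ | ⟨-, hyA'⟩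
        · exact hyB
        · exact absurd hyA' hyA
      exact Or.inr ⟨hyD, hyND, hyB⟩
  -- pair families are disjoint
  have hdisjACA : Disjoint PairsA PairsCA := by
    rw [disjoint_left]
    intro p hpA hpCA
    obtain ⟨-, -, -, hallD⟩ := hpairA p hpA
    rw [hPCAdef, mem_image] at hpCA
    obtain ⟨u, hu, heq⟩ := hpCA
    rw [hECAdef, mem_filter] at hu
    exact hu.2.2.1 (hallD _ (heq ▸ hyv_mem_everts u))
  have hdisjACB : Disjoint PairsA PairsCB := by
    rw [disjoint_left]
    intro p hpA hpCB
    obtain ⟨-, -, -, hallD⟩ := hpairA p hpA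
    rw [hPCBdef, mem_image] at hpCB
    obtain ⟨u, hu, heq⟩ := hpCB
    rw [hECBdef, mem_filter] at hu
    exact hu.2.2.1 (hallD _ (heq ▸ hyv_mem_everts u))
  -- crossing facts for the two instances
  have hcross2A : ∀ v w : V, s(v, w) ∈ G → v ∈ A → w ∈ B := by
    intro v w h hv
    rcases cross hGbip h with ⟨-, hb⟩ | ⟨hvB, -⟩
    · exact hb
    · exact absurd hvB (disjoint_left.1 hAB hv)
  have hcross2B : ∀ v w : V, s(v, w) ∈ G → v ∈ B → w ∈ A := by
    intro v w h hv
    rcases cross hGbip h with ⟨hvA, -⟩ | ⟨-, ha⟩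
    · exact absurd hv (disjoint_left.1 hAB hvA)
    · exact ha
  have hSSA : ∀ v, v ∈ A → v ∈ B → False := fun v hv hw => disjoint_left.1 hAB hv hw
  have hSSB : ∀ v, v ∈ B → v ∈ A → False := fun v hv hw => disjoint_left.1 hAB hw hv
  -- apply the expansion instance on each side
  obtain ⟨QA, hQAcard, hQAprops⟩ :=
    instance_bound hAB hGbip hHsUG hHsHsU hM' hM'sub hmax β k hβ Hfam hfam0 hfamk
      hfammono hfamdeg f hf hfprop A B hcross2A hSSA hMst (PairsA ∪ PairsCA)
      (union_subset (fun p hp => (hpairA p hp).1) (fun p hp => (hpairCA p hp).1))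
      (by
        intro p hp
        rcases mem_union.1 hp with hp | hp
        · obtain ⟨-, h1, h2, h3⟩ := hpairA p hp
          exact ⟨h1, h2, fun z hz => Or.inl (h3 z hz)⟩
        · obtain ⟨-, h1, h2, h3⟩ := hpairCA p hp
          exact ⟨h1, h2, h3⟩)
  obtain ⟨QB, hQBcard, hQBprops⟩ :=
    instance_bound hAB hGbip hHsUG hHsHsU hM' hM'sub hmax β k hβ Hfam hfam0 hfamk
      hfammono hfamdeg f hf hfprop B A hcross2B hSSB hMst (PairsA ∪ PairsCB)
      (union_subset (fun p hp => (hpairA p hp).1) (fun p hp => (hpairCB p hp).1))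
      (by
        intro p hp
        rcases mem_union.1 hp with hp | hp
        · obtain ⟨-, h1, h2, h3⟩ := hpairA p hp
          exact ⟨h1, h2, fun z hz => Or.inl (h3 z hz)⟩
        · obtain ⟨-, h1, h2, h3⟩ := hpairCB p hp
          exact ⟨h1, h2, h3⟩)
  -- the counting of matched covers
  set QQ : Finset V := QA ∪ QB with hQQdef
  set X1 : Finset V := QQ.filter (fun q => q ∈ NDset HsU M') with hX1def
  set X2A : Finset V := QA.filter (fun q => q ∉ NDset HsU M') with hX2Adef
  set X2B : Finset V := QB.filter (fun q => q ∉ NDset HsU M') with hX2Bdef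
  have hQQprops : ∀ q ∈ QQ, Matched M' q ∧ q ∉ Dset HsU M' := by
    intro q hq
    rcases mem_union.1 hq with hq | hq
    · exact (hQAprops q hq).1
    · exact (hQBprops q hq).1
  have hX2A_B : ∀ q ∈ X2A, q ∈ B := by
    intro q hq
    rw [hX2Adef, mem_filter] at hq
    rcases (hQAprops q hq.1).2 with h | h
    · exact absurd h hq.2
    · exact h
  have hX2B_A : ∀ q ∈ X2B, q ∈ A := by
    intro q hq
    rw [hX2Bdef, mem_filter] at hq
    rcases (hQBprops q hq.1).2 with h | h
    · exact absurd h hq.2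
    · exact h
  have hX2disj : Disjoint X2A X2B := by
    rw [disjoint_left]
    intro q hqa hqb
    exact disjoint_left.1 hAB (hX2B_A q hqb) (hX2A_B q hqa)
  set c : V → Sym2 V := fun q => s(q, pr M' q) with hcdef
  have hcmem : ∀ q ∈ QQ, c q ∈ M' := by
    intro q hq
    rw [hcdef]
    exact pr_edge (hQQprops q hq).1
  have h1hit : ∀ q ∈ X1, ∀ q' ∈ QQ, c q' = c q → q' = q := by
    intro q hq q' hq' heq
    rw [hX1def, mem_filter] at hq
    have hprD : pr M' q ∈ Dset HsU M' := by
      obtain ⟨v, hvD, hedge⟩ := hq.2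
      exact D_adj_partner hAB hGbip hHsUG hM' hM'sub hmax hvD hedge
    have hq'mem : q' ∈ c q := by
      rw [← heq, hcdef]
      exact Sym2.mem_mk_left _ _
    rw [hcdef] at hq'mem
    rcases Sym2.mem_iff.1 hq'mem with h | h
    · exact h
    · exact absurd (by rw [h]; exact hprD) (hQQprops q' hq').2
  set I1 : Finset (Sym2 V) := X1.image c with hI1def
  set I2 : Finset (Sym2 V) := (X2A ∪ X2B).image c with hI2def
  have hX1QQ : X1 ⊆ QQ := by rw [hX1def]; exact filter_subset _ _
  have hX2QQ : X2A ∪ X2B ⊆ QQ := by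
    apply union_subset
    · rw [hX2Adef]; exact (filter_subset _ _).trans subset_union_left
    · rw [hX2Bdef]; exact (filter_subset _ _).trans subset_union_right
  have hI1card : I1.card = X1.card := by
    rw [hI1def]
    apply Finset.card_image_of_injOn
    intro q hq q' hq' heq
    exact h1hit q' (Finset.mem_coe.1 hq') q (hX1QQ (Finset.mem_coe.1 hq)) heq
  have hdisjI : Disjoint I1 I2 := by
    rw [disjoint_left]
    intro e he1 he2
    rw [hI1def, mem_image] at he1
    rw [hI2def, mem_image] at he2
    obtain ⟨q, hq, rfl⟩ := he1
    obtain ⟨q', hq', heq⟩ := he2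
    have := h1hit q hq q' (hX2QQ hq') heq
    rcases mem_union.1 hq' with h | h
    · rw [hX2Adef, mem_filter] at h
      rw [hX1def, mem_filter] at hq
      rw [this] at h
      exact h.2 hq.2
    · rw [hX2Bdef, mem_filter] at h
      rw [hX1def, mem_filter] at hq
      rw [this] at h
      exact h.2 hq.2
  have hI2card : (X2A ∪ X2B).card ≤ 2 * I2.card := by
    rw [hI2def]
    apply Finset.card_le_mul_card_image
    intro b hb
    calc ((X2A ∪ X2B).filter (fun a => c a = b)).card ≤ (everts b).card := by
          apply Finset.card_le_card_of_injOn (fun a => a)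
          · intro a ha
            rw [Finset.mem_coe, mem_filter] at ha
            rw [Finset.mem_coe, mem_everts, ← ha.2, hcdef]
            exact Sym2.mem_mk_left _ _
          · intro a _ a' _ h
            exact h
      _ ≤ 2 := card_everts_le b
  have hIM : I1 ∪ I2 ⊆ M' := by
    apply union_subset
    · rw [hI1def]
      intro e he
      obtain ⟨q, hq, rfl⟩ := mem_image.1 he
      exact hcmem q (hX1QQ hq)
    · rw [hI2def]
      intro e he
      obtain ⟨q, hq, rfl⟩ := mem_image.1 he
      exact hcmem q (hX2QQ hq)
  have hM'count : 2 * X1.card + (X2A.card + X2B.card) ≤ 2 * M'.card := by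
    have h1 : I1.card + I2.card ≤ M'.card := by
      rw [← card_union_of_disjoint hdisjI]
      exact card_le_card hIM
    have h2 : X2A.card + X2B.card = (X2A ∪ X2B).card :=
      (card_union_of_disjoint hX2disj).symm
    omega
  have hQAle : QA.card ≤ X1.card + X2A.card := by
    have h1 := card_filter_add_card_filter_not
      (s := QA) (p := fun q => q ∈ NDset HsU M')
    have h2 : QA.filter (fun q => q ∈ NDset HsU M') ⊆ X1 := by
      intro q hq
      rw [mem_filter] at hq
      rw [hX1def, mem_filter]
      exact ⟨mem_union_left _ hq.1, hq.2⟩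
    have h3 := card_le_card h2
    rw [hX2Adef]
    omega
  have hQBle : QB.card ≤ X1.card + X2B.card := by
    have h1 := card_filter_add_card_filter_not
      (s := QB) (p := fun q => q ∈ NDset HsU M')
    have h2 : QB.filter (fun q => q ∈ NDset HsU M') ⊆ X1 := by
      intro q hq
      rw [mem_filter] at hq
      rw [hX1def, mem_filter]
      exact ⟨mem_union_right _ hq.1, hq.2⟩
    have h3 := card_le_card h2
    rw [hX2Bdef]
    omega
  -- the vertex-count identity and the ends count
  have hcount1 : 2 * Mstar.card ≤ 2 * M'.card +
      (2 * PairsA.card + PairsCA.card + PairsCB.card) := by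
    have e1 : S.card + (Vmat Mstar ∩ Vmat M').card = (Vmat Mstar).card := by
      rw [hSdef]; exact card_sdiff_add_card_inter _ _
    have e2 : St.card + (Vmat M' ∩ Vmat Mstar).card = (Vmat M').card := by
      rw [hStdef]; exact card_sdiff_add_card_inter _ _
    have e3 : (Vmat Mstar).card = 2 * Mstar.card := card_Vmat hMst
    have e4 : (Vmat M').card = 2 * M'.card := card_Vmat hM'
    have e5 : (Vmat Mstar ∩ Vmat M').card = (Vmat M' ∩ Vmat Mstar).card := by
      rw [inter_comm]
    omega
  -- assemble over the reals
  have hcardA : ((PairsA ∪ PairsCA).card : ℝ) = (PairsA.card : ℝ) + (PairsCA.card : ℝ) := by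
    rw [← Nat.cast_add, card_union_of_disjoint hdisjACA]
  have hcardB : ((PairsA ∪ PairsCB).card : ℝ) = (PairsA.card : ℝ) + (PairsCB.card : ℝ) := by
    rw [← Nat.cast_add, card_union_of_disjoint hdisjACB]
  rw [hcardA] at hQAcard
  rw [hcardB] at hQBcard
  have hQAleR : (QA.card : ℝ) ≤ (X1.card : ℝ) + (X2A.card : ℝ) := by exact_mod_cast hQAle
  have hQBleR : (QB.card : ℝ) ≤ (X1.card : ℝ) + (X2B.card : ℝ) := by exact_mod_cast hQBle
  have hM'countR : 2 * (X1.card : ℝ) + ((X2A.card : ℝ) + (X2B.card : ℝ)) ≤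
      2 * (M'.card : ℝ) := by exact_mod_cast hM'count
  have hfT : f * (2 * (PairsA.card : ℝ) + (PairsCA.card : ℝ) + (PairsCB.card : ℝ)) ≤
      (M'.card : ℝ) := by
    have key : f * (2 * ((PairsA.card : ℝ) + (PairsCA.card : ℝ))) +
        f * (2 * ((PairsA.card : ℝ) + (PairsCB.card : ℝ))) =
        2 * (f * (2 * (PairsA.card : ℝ) + (PairsCA.card : ℝ) + (PairsCB.card : ℝ))) := by
      ring
    linarith
  have hcount1R : 2 * (Mstar.card : ℝ) ≤ 2 * (M'.card : ℝ) +
      (2 * (PairsA.card : ℝ) + (PairsCA.card : ℝ) + (PairsCB.card : ℝ)) := by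
    exact_mod_cast hcount1
  -- finish
  rw [← hMstcard, ← hM'card]
  have hpos : (0 : ℝ) < 2 * f + 1 := by linarith
  rw [div_mul_eq_mul_div, div_le_iff₀ hpos]
  nlinarith [mul_le_mul_of_nonneg_left hcount1R hf]
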